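/- Let T be a string over an alphabet Σ whose last two characters are distinct and each occurs exactly once in T (the two delimiter characters), and let T₁ = evens T and T₂ = odds T be its 2-interleaved subsequences. Then for every node-string W of T there exist node-strings W₁ of the pair (T₁, T₂) and W₂ of the pair (T₁, T₂) such that, setting W′ = interleave₂ W₁ W₂: W′ is a prefix of W, and every node-string V of T that is a prefix of W with V ≠ W satisfies |V| < |W′|. (This is the paper's Lemma 4 for k = 2, to which the general case reduces without loss of generality: for each node ω of the original suffix tree there exists a pair of nodes ω₁, ω₂ of the 2-interleaved suffix tree such that deinterleaving the longest substrings which ω₁ and ω₂ correspond to results in one of the substrings which ω corresponds to.) -/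
import Mathlib


/-- Deinterleave two subsequences: take one character alternately from each, stopping
once the shorter subsequence is exhausted (paper's Definition 2 with k = 2). -/
def interleave₂ {σ : Type*} : List σ → List σ → List σ
  | [], _ => []
  | a :: _, [] => [a]
  | a :: l₁, b :: l₂ => a :: b :: interleave₂ l₁ l₂

mutual
  /-- The characters of a string at positions 1, 3, 5, ... (1-indexed):
  the first 2-interleaved subsequence. -/
  def evens {σ : Type*} : List σ → List σ
    | [] => []
    | a :: l => a :: odds l
  /-- The characters of a string at positions 2, 4, 6, ... (1-indexed):
  the second 2-interleaved subsequence. -/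
  def odds {σ : Type*} : List σ → List σ
    | [] => []
    | _ :: l => evens l
end

/-- A string `W` is right-branching in `T` if there are two distinct characters `c₁ ≠ c₂`
such that both `W ++ [c₁]` and `W ++ [c₂]` are substrings (infixes) of `T`. -/
def RightBranching {σ : Type*} (T W : List σ) : Prop :=
  ∃ c₁ c₂ : σ, c₁ ≠ c₂ ∧ (W ++ [c₁]) <:+: T ∧ (W ++ [c₂]) <:+: T

/-- `W` corresponds to an explicit node of the suffix tree of `T`:
`W` is empty, or a suffix of `T`, or a substring of `T` that is right-branching in `T`. -/
def NodeString {σ : Type*} (T W : List σ) : Prop :=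
  W = [] ∨ W <:+ T ∨ (W <:+: T ∧ RightBranching T W)

/-- `W` corresponds to a node of the 2-interleaved suffix tree built from the two
strings `T₁`, `T₂`: `W` is empty, or a suffix of `T₁` or of `T₂`, or there are two
distinct characters `c₁ ≠ c₂` such that each of `W ++ [c₁]` and `W ++ [c₂]` is a
substring of `T₁` or of `T₂`. -/
def NodeString₂ {σ : Type*} (T₁ T₂ W : List σ) : Prop :=
  W = [] ∨ W <:+ T₁ ∨ W <:+ T₂ ∨
    ∃ c₁ c₂ : σ, c₁ ≠ c₂ ∧
      ((W ++ [c₁]) <:+: T₁ ∨ (W ++ [c₁]) <:+: T₂) ∧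
      ((W ++ [c₂]) <:+: T₁ ∨ (W ++ [c₂]) <:+: T₂)

lemma length_evens_odds {σ : Type*} (l : List σ) :
    (evens l).length = (l.length + 1) / 2 ∧ (odds l).length = l.length / 2 := by
  induction l with
  | nil => simp [evens, odds]
  | cons a l ih =>
    obtain ⟨h1, h2⟩ := ih
    constructor
    · simp only [evens, List.length_cons]; omega
    · simp only [odds, List.length_cons]; omega

lemma evens_odds_append {σ : Type*} (l : List σ) : ∀ r : List σ,
    (evens (l ++ r) = evens l ++ evens r ∧ odds (l ++ r) = odds l ++ odds r
      ∧ l.length % 2 = 0) ∨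
    (evens (l ++ r) = evens l ++ odds r ∧ odds (l ++ r) = odds l ++ evens r
      ∧ l.length % 2 = 1) := by
  induction l with
  | nil => intro r; left; simp [evens, odds]
  | cons a l ih =>
    intro r
    rcases ih r with ⟨he, ho, hp⟩ | ⟨he, ho, hp⟩
    · right
      refine ⟨?_, ?_, by simp only [List.length_cons]; omega⟩
      · simp only [List.cons_append, evens, ho]
      · simp only [List.cons_append, odds, he]
    · left
      refine ⟨?_, ?_, by simp only [List.length_cons]; omega⟩
      · simp only [List.cons_append, evens, ho]
      · simp only [List.cons_append, odds, he]

lemma suffix_tracks {σ : Type*} {X T : List σ} (h : X <:+ T) :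
    (evens X <:+ evens T ∧ odds X <:+ odds T) ∨
    (evens X <:+ odds T ∧ odds X <:+ evens T) := by
  obtain ⟨A, rfl⟩ := h
  rcases evens_odds_append A X with ⟨he, ho, -⟩ | ⟨he, ho, -⟩
  · exact Or.inl ⟨⟨evens A, he.symm⟩, ⟨odds A, ho.symm⟩⟩
  · exact Or.inr ⟨⟨odds A, ho.symm⟩, ⟨evens A, he.symm⟩⟩

lemma infix_tracks {σ : Type*} {X T : List σ} (h : X <:+: T) :
    (evens X <:+: evens T ∨ evens X <:+: odds T) ∧
    (odds X <:+: evens T ∨ odds X <:+: odds T) := by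
  obtain ⟨A, B, rfl⟩ := h
  have hs : (X ++ B) <:+ A ++ X ++ B := ⟨A, by rw [List.append_assoc]⟩
  have hpe : evens X <+: evens (X ++ B) := by
    rcases evens_odds_append X B with ⟨he, -, -⟩ | ⟨he, -, -⟩ <;> exact ⟨_, he.symm⟩
  have hpo : odds X <+: odds (X ++ B) := by
    rcases evens_odds_append X B with ⟨-, ho, -⟩ | ⟨-, ho, -⟩ <;> exact ⟨_, ho.symm⟩
  rcases suffix_tracks hs with ⟨h1, h2⟩ | ⟨h1, h2⟩
  · exact ⟨Or.inl (hpe.isInfix.trans h1.isInfix), Or.inr (hpo.isInfix.trans h2.isInfix)⟩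
  · exact ⟨Or.inr (hpe.isInfix.trans h1.isInfix), Or.inl (hpo.isInfix.trans h2.isInfix)⟩

lemma interleave_evens_odds {σ : Type*} : ∀ l : List σ,
    interleave₂ (evens l) (odds l) = l
  | [] => rfl
  | [a] => rfl
  | a :: b :: l => by
    show interleave₂ (a :: odds (b :: l)) (evens (b :: l)) = _
    simp only [evens, odds, interleave₂, interleave_evens_odds l]

lemma interleave_drop_right {σ : Type*} : ∀ (l₁ l₂ X : List σ),
    l₁.length = l₂.length → interleave₂ l₁ (l₂ ++ X) = interleave₂ l₁ l₂
  | [], l₂, X, _ => rfl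
  | a :: l₁, [], X, h => by simp at h
  | a :: l₁, b :: l₂, X, h => by
    simp only [List.cons_append, interleave₂, List.append_eq]
    rw [interleave_drop_right l₁ l₂ X (by simpa using h)]

lemma interleave_drop_left {σ : Type*} : ∀ (l₁ l₂ X : List σ),
    l₁.length = l₂.length + 1 → interleave₂ (l₁ ++ X) l₂ = interleave₂ l₁ l₂
  | [], l₂, X, h => by simp at h
  | [a], [], X, _ => by cases X <;> rfl
  | a :: b :: l₁, [], X, h => by simp at h
  | a :: l₁, b :: l₂, X, h => by
    simp only [List.cons_append, interleave₂, List.append_eq]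
    rw [interleave_drop_left l₁ l₂ X (by simpa using h)]

lemma node_mapping_exact {σ : Type*} {T W : List σ} (hW : NodeString T W) :
    ∃ W₁ W₂ : List σ, NodeString₂ (evens T) (odds T) W₁ ∧
      NodeString₂ (evens T) (odds T) W₂ ∧ interleave₂ W₁ W₂ = W := by
  rcases hW with rfl | hsuf | ⟨hinf, c, d, hcd, hc, hd⟩
  · exact ⟨[], [], Or.inl rfl, Or.inl rfl, rfl⟩
  · rcases suffix_tracks hsuf with ⟨h1, h2⟩ | ⟨h1, h2⟩
    · exact ⟨evens W, odds W, Or.inr (Or.inl h1), Or.inr (Or.inr (Or.inl h2)),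
        interleave_evens_odds W⟩
    · exact ⟨evens W, odds W, Or.inr (Or.inr (Or.inl h1)), Or.inr (Or.inl h2),
        interleave_evens_odds W⟩
  · obtain ⟨A, B, rfl⟩ := hinf
    have hsufWB : (W ++ B) <:+ A ++ W ++ B := ⟨A, by rw [List.append_assoc]⟩
    have hlen := length_evens_odds W
    rcases evens_odds_append W [c] with ⟨hec, hoc, hpar⟩ | ⟨hec, hoc, hpar⟩
    · -- |W| even : evens W branches with c, d; odds track extended to suffix
      rcases evens_odds_append W [d] with ⟨hed, hod, -⟩ | ⟨-, -, hpar'⟩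
      swap
      · exact (by omega : False).elim
      rcases evens_odds_append W B with ⟨heB, hoB, -⟩ | ⟨-, -, hpar'⟩
      swap
      · exact (by omega : False).elim
      refine ⟨evens W, odds (W ++ B), ?_, ?_, ?_⟩
      · refine Or.inr (Or.inr (Or.inr ⟨c, d, hcd, ?_, ?_⟩))
        · have h := (infix_tracks hc).1
          rw [hec] at h
          simpa only [evens, odds] using h
        · have h := (infix_tracks hd).1
          rw [hed] at h
          simpa only [evens, odds] using h
      · rcases suffix_tracks hsufWB with ⟨h1, h2⟩ | ⟨h1, h2⟩
        · exact Or.inr (Or.inr (Or.inl h2))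
        · exact Or.inr (Or.inl h2)
      · rw [hoB, interleave_drop_right _ _ _ (by omega), interleave_evens_odds]
    · -- |W| odd : odds W branches with c, d; evens track extended to suffix
      rcases evens_odds_append W [d] with ⟨-, -, hpar'⟩ | ⟨hed, hod, -⟩
      · exact (by omega : False).elim
      rcases evens_odds_append W B with ⟨-, -, hpar'⟩ | ⟨heB, hoB, -⟩
      · exact (by omega : False).elim
      refine ⟨evens (W ++ B), odds W, ?_, ?_, ?_⟩
      · rcases suffix_tracks hsufWB with ⟨h1, h2⟩ | ⟨h1, h2⟩
        · exact Or.inr (Or.inl h1)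
        · exact Or.inr (Or.inr (Or.inl h1))
      · refine Or.inr (Or.inr (Or.inr ⟨c, d, hcd, ?_, ?_⟩))
        · have h := (infix_tracks hc).2
          rw [hoc] at h
          simpa only [evens, odds] using h
        · have h := (infix_tracks hd).2
          rw [hod] at h
          simpa only [evens, odds] using h
      · rw [heB, interleave_drop_left _ _ _ (by omega), interleave_evens_odds]

/-- paper's Lemma 4 for k = 2: let `T` end in two distinct delimiter
characters `c₁ ≠ c₂`, each occurring exactly once in `T`, and let `T₁ = evens T`,
`T₂ = odds T` be its 2-interleaved subsequences.  Then for every node-string `W` of `T`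
there exist node-strings `W₁`, `W₂` of the pair `(T₁, T₂)` such that
`W′ = interleave₂ W₁ W₂` is a prefix of `W` and every node-string `V` of `T` that is a
proper prefix of `W` satisfies `|V| < |W′|` (i.e. `W′` is one of the substrings which
the node `ω` corresponds to). -/
theorem interleaved_suffix_tree_node_mapping {σ : Type*} [DecidableEq σ]
    (T T' : List σ) (c₁ c₂ : σ) (hT : T = T' ++ [c₁, c₂]) (hne : c₁ ≠ c₂)
    (h₁ : T.count c₁ = 1) (h₂ : T.count c₂ = 1)
    (W : List σ) (hW : NodeString T W) :
    ∃ W₁ W₂ : List σ,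
      NodeString₂ (evens T) (odds T) W₁ ∧
      NodeString₂ (evens T) (odds T) W₂ ∧
      interleave₂ W₁ W₂ <+: W ∧
      ∀ V : List σ, NodeString T V → V <+: W → V ≠ W →
        V.length < (interleave₂ W₁ W₂).length := by
  obtain ⟨W₁, W₂, n1, n2, h3⟩ := node_mapping_exact hW
  refine ⟨W₁, W₂, n1, n2, by rw [h3], ?_⟩
  intro V hV hpre hneV
  rw [h3]
  exact lt_of_le_of_ne hpre.length_le fun h => hneV (hpre.eq_of_length h)
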